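/- arXiv:1102.1639 — 3 statements merged into one kernel-verified Lean document; each statement's English description precedes it below -/
import Mathlib

section
/- Let V = ℝ^d with d ≥ 2 and let C be a compact connected subgroup of GL(d,ℝ) such that the only vector v ∈ V fixed by every element of C is v = 0. Let λ be a Borel probability measure on V that is invariant under every element of C (i.e., g_*λ = λ for all g ∈ C). If A is an affine subspace of V with λ(A) > 0, then A is a vector subspace of V (in particular 0 ∈ A). -/
open MeasureTheory Matrix

section Aux

variable {d : ℕ}

/-- The action of `g ∈ GL(d,ℝ)` on affine subspaces of `ℝ^d`. -/
noncomputable abbrev amap (g : GL (Fin d) ℝ) (A : AffineSubspace ℝ (Fin d → ℝ)) :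
    AffineSubspace ℝ (Fin d → ℝ) :=
  A.map ((Matrix.mulVecLin (g : Matrix (Fin d) (Fin d) ℝ)).toAffineMap)

lemma amap_coe (g : GL (Fin d) ℝ) (A : AffineSubspace ℝ (Fin d → ℝ)) :
    (amap g A : Set (Fin d → ℝ))
      = (fun v => Matrix.mulVec (g : Matrix (Fin d) (Fin d) ℝ) v) '' A := by
  simp [amap, AffineSubspace.coe_map]
  rfl

lemma amap_amap (g h : GL (Fin d) ℝ) (A : AffineSubspace ℝ (Fin d → ℝ)) :
    amap g (amap h A) = amap (g * h) A := by
  rw [amap, amap, AffineSubspace.map_map]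
  congr 1
  ext v
  simp [Matrix.mulVec_mulVec]

lemma amap_one (A : AffineSubspace ℝ (Fin d → ℝ)) : amap (1 : GL (Fin d) ℝ) A = A := by
  ext v; simp [amap]

lemma mulVec_injective (g : GL (Fin d) ℝ) :
    Function.Injective (fun v => Matrix.mulVec (g : Matrix (Fin d) (Fin d) ℝ) v) := by
  intro x y hxy
  have h := congrArg
    (fun v => Matrix.mulVec ((g⁻¹ : GL (Fin d) ℝ) : Matrix (Fin d) (Fin d) ℝ) v) hxy
  simp only [Matrix.mulVec_mulVec] at h
  rwa [← Matrix.GeneralLinearGroup.coe_mul, inv_mul_cancel,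
    Matrix.GeneralLinearGroup.coe_one, Matrix.one_mulVec, Matrix.one_mulVec] at h

lemma amap_eq_iff (g : GL (Fin d) ℝ) (A B : AffineSubspace ℝ (Fin d → ℝ)) :
    amap g A = B ↔ ((∀ p ∈ A, (g : Matrix (Fin d) (Fin d) ℝ) *ᵥ p ∈ B)
      ∧ (∀ q ∈ B, ((g⁻¹ : GL (Fin d) ℝ) : Matrix (Fin d) (Fin d) ℝ) *ᵥ q ∈ A)) := by
  rw [← SetLike.coe_set_eq, amap_coe]
  constructor
  · rintro h
    constructor
    · intro p hp
      have : (g : Matrix (Fin d) (Fin d) ℝ) *ᵥ p ∈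
          ((fun v => Matrix.mulVec (g : Matrix (Fin d) (Fin d) ℝ) v) '' A) := ⟨p, hp, rfl⟩
      rw [h] at this; exact this
    · intro q hq
      have hq' : q ∈ (fun v => Matrix.mulVec (g : Matrix (Fin d) (Fin d) ℝ) v) '' A := by
        rw [h]; exact hq
      obtain ⟨p, hp, rfl⟩ := hq'
      rwa [Matrix.mulVec_mulVec, ← Matrix.GeneralLinearGroup.coe_mul, inv_mul_cancel,
        Matrix.GeneralLinearGroup.coe_one, Matrix.one_mulVec]
  · rintro ⟨h1, h2⟩
    apply subset_antisymm
    · rintro _ ⟨p, hp, rfl⟩; exact h1 p hp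
    · intro q hq
      refine ⟨_, h2 q hq, ?_⟩
      show (g : Matrix (Fin d) (Fin d) ℝ) *ᵥ (((g⁻¹ : GL (Fin d) ℝ) : Matrix (Fin d) (Fin d) ℝ) *ᵥ q) = q
      rw [Matrix.mulVec_mulVec, ← Matrix.GeneralLinearGroup.coe_mul, mul_inv_cancel,
        Matrix.GeneralLinearGroup.coe_one, Matrix.one_mulVec]

set_option maxHeartbeats 1000000 in
lemma finrank_amap (g : GL (Fin d) ℝ) (A : AffineSubspace ℝ (Fin d → ℝ)) :
    Module.finrank ℝ (amap g A).direction = Module.finrank ℝ A.direction := by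
  rw [amap, AffineSubspace.map_direction]
  let e : (Fin d → ℝ) ≃ₗ[ℝ] (Fin d → ℝ) :=
    LinearEquiv.ofLinear (Matrix.mulVecLin (g : Matrix (Fin d) (Fin d) ℝ))
      (Matrix.mulVecLin ((g⁻¹ : GL (Fin d) ℝ) : Matrix (Fin d) (Fin d) ℝ))
      (by
        rw [← Matrix.mulVecLin_mul, ← Matrix.GeneralLinearGroup.coe_mul, mul_inv_cancel,
          Matrix.GeneralLinearGroup.coe_one, Matrix.mulVecLin_one])
      (by
        rw [← Matrix.mulVecLin_mul, ← Matrix.GeneralLinearGroup.coe_mul, inv_mul_cancel,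
          Matrix.GeneralLinearGroup.coe_one, Matrix.mulVecLin_one])
  exact LinearEquiv.finrank_map_eq e A.direction

lemma finrank_lt_of_lt {A B : AffineSubspace ℝ (Fin d → ℝ)} (hBA : B ≤ A) (hne : B ≠ A)
    (hB : (B : Set (Fin d → ℝ)).Nonempty) :
    Module.finrank ℝ B.direction < Module.finrank ℝ A.direction := by
  obtain ⟨x, hx⟩ := hB
  rcases (AffineSubspace.direction_le hBA).lt_or_eq with h | h
  · exact Submodule.finrank_lt_finrank_of_lt h
  · exact absurd (AffineSubspace.ext_of_direction_eq h ⟨x, hx, hBA hx⟩) hne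

lemma inf_ne_of_amap_ne (g : GL (Fin d) ℝ) (A : AffineSubspace ℝ (Fin d → ℝ))
    (hg : amap g A ≠ A) (hne : ((amap g A ⊓ A : AffineSubspace ℝ (Fin d → ℝ)) :
      Set (Fin d → ℝ)).Nonempty) : amap g A ⊓ A ≠ A := by
  intro h
  apply hg
  have hle : A ≤ amap g A := le_of_eq_of_le h.symm inf_le_left
  have hdir : A.direction = (amap g A).direction :=
    Submodule.eq_of_le_of_finrank_eq (AffineSubspace.direction_le hle)
      (by rw [finrank_amap])
  obtain ⟨x, hx⟩ := hne
  exact AffineSubspace.ext_of_direction_eq hdir.symm ⟨x, hx.1, hx.2⟩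

/-- Measure preservation for images of measurable sets. -/
lemma meas_image (lam : Measure (Fin d → ℝ)) (C : Subgroup (GL (Fin d) ℝ))
    (hinv : ∀ g ∈ C,
      lam.map (fun v => Matrix.mulVec (g : Matrix (Fin d) (Fin d) ℝ) v) = lam)
    {g : GL (Fin d) ℝ} (hg : g ∈ C) {s : Set (Fin d → ℝ)} (hs : MeasurableSet s) :
    lam ((fun v => Matrix.mulVec (g : Matrix (Fin d) (Fin d) ℝ) v) '' s) = lam s := by
  have h1 : (fun v => Matrix.mulVec (g : Matrix (Fin d) (Fin d) ℝ) v) '' s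
      = (fun v => Matrix.mulVec ((g⁻¹ : GL (Fin d) ℝ) : Matrix (Fin d) (Fin d) ℝ) v) ⁻¹' s := by
    ext y
    simp only [Set.mem_image, Set.mem_preimage]
    constructor
    · rintro ⟨x, hx, rfl⟩
      rwa [Matrix.mulVec_mulVec, ← Matrix.GeneralLinearGroup.coe_mul, inv_mul_cancel,
        Matrix.GeneralLinearGroup.coe_one, Matrix.one_mulVec]
    · intro hy
      refine ⟨_, hy, ?_⟩
      rw [Matrix.mulVec_mulVec, ← Matrix.GeneralLinearGroup.coe_mul, mul_inv_cancel,
        Matrix.GeneralLinearGroup.coe_one, Matrix.one_mulVec]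
  have hcont : Continuous
      (fun v => Matrix.mulVec ((g⁻¹ : GL (Fin d) ℝ) : Matrix (Fin d) (Fin d) ℝ) v) :=
    (Matrix.mulVecLin ((g⁻¹ : GL (Fin d) ℝ) : Matrix (Fin d) (Fin d) ℝ)).toContinuousLinearMap.continuous
  rw [h1, ← Measure.map_apply hcont.measurable hs, hinv _ (inv_mem hg)]

lemma orbit_finite (C : Subgroup (GL (Fin d) ℝ)) (lam : Measure (Fin d → ℝ))
    [IsProbabilityMeasure lam]
    (hinv : ∀ g ∈ C,
      lam.map (fun v => Matrix.mulVec (g : Matrix (Fin d) (Fin d) ℝ) v) = lam)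
    (A : AffineSubspace ℝ (Fin d → ℝ)) (hA : 0 < lam (A : Set (Fin d → ℝ)))
    (hnull : ∀ g ∈ C, amap g A = A ∨
      lam ((amap g A : Set (Fin d → ℝ)) ∩ (A : Set (Fin d → ℝ))) = 0) :
    ((fun g : GL (Fin d) ℝ => amap g A) '' (C : Set (GL (Fin d) ℝ))).Finite := by
  have hmeas : ∀ B : AffineSubspace ℝ (Fin d → ℝ), MeasurableSet (B : Set (Fin d → ℝ)) :=
    fun B => B.closed_of_finiteDimensional.measurableSet
  set O := ((fun g : GL (Fin d) ℝ => amap g A) '' (C : Set (GL (Fin d) ℝ))) with hO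
  -- each element of the orbit has measure `lam A`
  have hmeasval : ∀ B ∈ O, lam (B : Set (Fin d → ℝ)) = lam (A : Set (Fin d → ℝ)) := by
    rintro B ⟨g, hg, rfl⟩
    rw [amap_coe]
    exact meas_image lam C hinv hg (hmeas A)
  -- pairwise a.e. disjointness
  have hpair : ∀ B₁ ∈ O, ∀ B₂ ∈ O, B₁ ≠ B₂ →
      lam ((B₁ : Set (Fin d → ℝ)) ∩ (B₂ : Set (Fin d → ℝ))) = 0 := by
    rintro B₁ ⟨g, hg, rfl⟩ B₂ ⟨h, hh, rfl⟩ hne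
    set c : GL (Fin d) ℝ := g⁻¹ * h with hc
    have hcC : c ∈ C := mul_mem (inv_mem hg) hh
    have hgc : g * c = h := by rw [hc, ← mul_assoc, mul_inv_cancel, one_mul]
    have himg : (amap g A : Set (Fin d → ℝ)) ∩ (amap h A : Set (Fin d → ℝ))
        = (fun v => Matrix.mulVec (g : Matrix (Fin d) (Fin d) ℝ) v) ''
          ((A : Set (Fin d → ℝ)) ∩ (amap c A : Set (Fin d → ℝ))) := by
      rw [Set.image_inter (mulVec_injective g), ← amap_coe, ← amap_coe, amap_amap, hgc]
    have hcA : amap c A ≠ A := by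
      intro hcA
      apply hne
      show amap g A = amap h A
      rw [← hgc, ← amap_amap, hcA]
    have h0 : lam ((A : Set (Fin d → ℝ)) ∩ (amap c A : Set (Fin d → ℝ))) = 0 := by
      rcases hnull c hcC with h | h
      · exact absurd h hcA
      · rwa [Set.inter_comm]
    rw [himg, meas_image lam C hinv hg ((hmeas A).inter (hmeas _)), h0]
  -- apply the finiteness criterion
  have key := MeasureTheory.Measure.finite_const_le_meas_of_disjoint_iUnion₀ lam
    (ε := lam (A : Set (Fin d → ℝ))) hA
    (As := fun B : O => ((B : AffineSubspace ℝ (Fin d → ℝ)) : Set (Fin d → ℝ)))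
    (fun B => (hmeas _).nullMeasurableSet)
    (fun i j hij => hpair _ i.2 _ j.2 (fun h => hij (Subtype.ext h)))
    (measure_ne_top lam _)
  have : {i : O | lam (A : Set (Fin d → ℝ))
      ≤ lam ((i : AffineSubspace ℝ (Fin d → ℝ)) : Set (Fin d → ℝ))} = Set.univ := by
    ext i
    simp [hmeasval _ i.2]
  rw [this, Set.finite_univ_iff] at key
  exact Set.toFinite O

set_option synthInstance.maxHeartbeats 1000000 in
set_option maxHeartbeats 1000000 in
lemma stab_all (C : Subgroup (GL (Fin d) ℝ))
    (hCconn : IsConnected (C : Set (GL (Fin d) ℝ)))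
    (A : AffineSubspace ℝ (Fin d → ℝ))
    (hfin : ((fun g : GL (Fin d) ℝ => amap g A) '' (C : Set (GL (Fin d) ℝ))).Finite) :
    ∀ g ∈ C, amap g A = A := by
  haveI : ConnectedSpace (C : Set (GL (Fin d) ℝ)) := isConnected_iff_connectedSpace.mp hCconn
  set O := ((fun g : GL (Fin d) ℝ => amap g A) '' (C : Set (GL (Fin d) ℝ))) with hO
  have hclosed : ∀ B : AffineSubspace ℝ (Fin d → ℝ),
      IsClosed {x : (C : Set (GL (Fin d) ℝ)) | amap (x : GL (Fin d) ℝ) A = B} := by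
    intro B
    have : {x : (C : Set (GL (Fin d) ℝ)) | amap (x : GL (Fin d) ℝ) A = B}
        = (⋂ p ∈ A, {x : (C : Set (GL (Fin d) ℝ)) |
            ((x : GL (Fin d) ℝ) : Matrix (Fin d) (Fin d) ℝ) *ᵥ p ∈ (B : Set (Fin d → ℝ))})
          ∩ (⋂ q ∈ B, {x : (C : Set (GL (Fin d) ℝ)) |
            (((x : GL (Fin d) ℝ)⁻¹ : GL (Fin d) ℝ) : Matrix (Fin d) (Fin d) ℝ) *ᵥ q
              ∈ (A : Set (Fin d → ℝ))}) := by
      ext x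
      simp only [Set.mem_setOf_eq, Set.mem_inter_iff, Set.mem_iInter, amap_eq_iff]
      tauto
    rw [this]
    have hc1 : Continuous (fun x : (C : Set (GL (Fin d) ℝ)) =>
        ((x : GL (Fin d) ℝ) : Matrix (Fin d) (Fin d) ℝ)) :=
      Units.continuous_val.comp continuous_subtype_val
    have hc2 : Continuous (fun x : (C : Set (GL (Fin d) ℝ)) =>
        (((x : GL (Fin d) ℝ)⁻¹ : GL (Fin d) ℝ) : Matrix (Fin d) (Fin d) ℝ)) :=
      Units.continuous_val.comp (continuous_inv.comp continuous_subtype_val)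
    apply IsClosed.inter
    · exact isClosed_biInter fun p _ => B.closed_of_finiteDimensional.preimage
        (Continuous.matrix_mulVec hc1 continuous_const)
    · exact isClosed_biInter fun q _ => A.closed_of_finiteDimensional.preimage
        (Continuous.matrix_mulVec hc2 continuous_const)
  set S : Set (C : Set (GL (Fin d) ℝ)) := {x | amap (x : GL (Fin d) ℝ) A = A} with hS
  have hSclopen : IsClopen S := by
    refine ⟨hclosed A, ?_⟩
    · have : Sᶜ = ⋃ B ∈ (O \ {A} : Set _),
          {x : (C : Set (GL (Fin d) ℝ)) | amap (x : GL (Fin d) ℝ) A = B} := by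
        ext x
        simp only [Set.mem_compl_iff, hS, Set.mem_setOf_eq, Set.mem_iUnion, Set.mem_diff,
          Set.mem_singleton_iff]
        constructor
        · intro hx
          exact ⟨amap (x : GL (Fin d) ℝ) A, ⟨⟨x, x.2, rfl⟩, hx⟩, rfl⟩
        · rintro ⟨B, ⟨_, hBA⟩, hxB⟩ h
          exact hBA (hxB ▸ h)
      rw [← isClosed_compl_iff, this]
      exact Set.Finite.isClosed_biUnion hfin.diff fun B _ => hclosed B
  have hSuniv : S = Set.univ :=
    hSclopen.eq_univ ⟨⟨1, C.one_mem⟩, amap_one A⟩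
  intro g hg
  have : (⟨g, hg⟩ : (C : Set (GL (Fin d) ℝ))) ∈ S := hSuniv ▸ Set.mem_univ _
  exact this

set_option synthInstance.maxHeartbeats 1000000 in
set_option maxHeartbeats 1000000 in
lemma zero_mem_of_stab (C : Subgroup (GL (Fin d) ℝ))
    (hCcompact : IsCompact (C : Set (GL (Fin d) ℝ)))
    (A : AffineSubspace ℝ (Fin d → ℝ)) (a : Fin d → ℝ) (ha : a ∈ A)
    (hstab : ∀ g ∈ C, ∀ x ∈ A, Matrix.mulVec (g : Matrix (Fin d) (Fin d) ℝ) x ∈ A)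
    (hfix : ∀ v : Fin d → ℝ,
      (∀ g ∈ C, Matrix.mulVec (g : Matrix (Fin d) (Fin d) ℝ) v = v) → v = 0) :
    (0 : Fin d → ℝ) ∈ A := by
  letI G := C
  haveI : CompactSpace G := isCompact_iff_compactSpace.mp hCcompact
  letI : MeasurableSpace G := borel G
  haveI : BorelSpace G := ⟨rfl⟩
  let μ : Measure G := Measure.haar
  haveI : IsFiniteMeasure μ := CompactSpace.isFiniteMeasure
  have hμuniv : μ Set.univ ≠ 0 := IsOpen.measure_ne_zero μ isOpen_univ Set.univ_nonempty
  let ν : Measure G := (μ Set.univ)⁻¹ • μ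
  haveI hν : IsProbabilityMeasure ν := by
    constructor
    simp [ν, ENNReal.inv_mul_cancel hμuniv (measure_ne_top μ Set.univ)]
  haveI : ν.IsMulLeftInvariant := by
    constructor
    intro g
    rw [Measure.map_smul]
    congr 1
    exact MeasureTheory.map_mul_left_eq_self μ g
  let F : G → (Fin d → ℝ) := fun g =>
    Matrix.mulVec ((g : GL (Fin d) ℝ) : Matrix (Fin d) (Fin d) ℝ) a
  have hFc : Continuous F :=
    Continuous.matrix_mulVec (Units.continuous_val.comp continuous_subtype_val)
      continuous_const
  have hFi : Integrable F ν := by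
    apply hFc.integrable_of_hasCompactSupport
    exact HasCompactSupport.of_compactSpace _
  set u : Fin d → ℝ := ∫ g, F g ∂ν with hu
  have hfixu : ∀ h ∈ C, Matrix.mulVec ((h : GL (Fin d) ℝ) : Matrix (Fin d) (Fin d) ℝ) u = u := by
    intro h hh
    let L : (Fin d → ℝ) →L[ℝ] (Fin d → ℝ) :=
      LinearMap.toContinuousLinearMap
        (Matrix.mulVecLin ((h : GL (Fin d) ℝ) : Matrix (Fin d) (Fin d) ℝ))
    have h1 : Matrix.mulVec ((h : GL (Fin d) ℝ) : Matrix (Fin d) (Fin d) ℝ) u = L u := rfl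
    rw [h1, hu, ← ContinuousLinearMap.integral_comp_comm L hFi]
    have h2 : ∀ g : G, L (F g) = F ((⟨h, hh⟩ : G) * g) := by
      intro g
      show ((h : Matrix (Fin d) (Fin d) ℝ)) *ᵥ
        (((g : GL (Fin d) ℝ) : Matrix (Fin d) (Fin d) ℝ) *ᵥ a) = _
      rw [Matrix.mulVec_mulVec]
      rfl
    simp_rw [h2]
    exact MeasureTheory.integral_mul_left_eq_self F _
  have hu0 : u = 0 := hfix u hfixu
  have humem : u ∈ A := by
    rw [hu]
    apply (AffineSubspace.convex A).integral_mem A.closed_of_finiteDimensional ?_ hFi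
    filter_upwards with g
    exact hstab _ g.2 a ha
  rwa [hu0] at humem

end Aux

/-- Let `V = ℝ^d`, `d ≥ 2`, and `C` a compact connected subgroup of
`GL(d,ℝ)` whose action on `V` has no nonzero fixed point.  If `lam` is a `C`-invariant
Borel probability measure on `V` and `A` is an affine subspace with `lam A > 0`, then
`A` is a vector subspace (in particular `0 ∈ A`). -/
theorem stmt0 (d : ℕ) (hd : 2 ≤ d)
    (C : Subgroup (GL (Fin d) ℝ))
    (hCcompact : IsCompact (C : Set (GL (Fin d) ℝ)))
    (hCconn : IsConnected (C : Set (GL (Fin d) ℝ)))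
    (hfix : ∀ v : Fin d → ℝ,
      (∀ g ∈ C, Matrix.mulVec (g : Matrix (Fin d) (Fin d) ℝ) v = v) → v = 0)
    (lam : Measure (Fin d → ℝ)) [IsProbabilityMeasure lam]
    (hinv : ∀ g ∈ C,
      lam.map (fun v => Matrix.mulVec (g : Matrix (Fin d) (Fin d) ℝ) v) = lam)
    (A : AffineSubspace ℝ (Fin d → ℝ)) (hA : 0 < lam (A : Set (Fin d → ℝ))) :
    (0 : Fin d → ℝ) ∈ A ∧ ∃ W : Submodule ℝ (Fin d → ℝ), (A : Set (Fin d → ℝ)) = W := by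
  -- the fixed-subspace case
  have fixed_case : ∀ B : AffineSubspace ℝ (Fin d → ℝ), 0 < lam (B : Set (Fin d → ℝ)) →
      (∀ g ∈ C, amap g B = B ∨
        lam ((amap g B : Set (Fin d → ℝ)) ∩ (B : Set (Fin d → ℝ))) = 0) →
      (0 : Fin d → ℝ) ∈ B := by
    intro B hBpos hnull
    have hfin := orbit_finite C lam hinv B hBpos hnull
    have hstab := stab_all C hCconn B hfin
    have hBne : (B : Set (Fin d → ℝ)).Nonempty := by
      rw [Set.nonempty_iff_ne_empty]
      intro h
      rw [h] at hBpos
      simp at hBpos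
    obtain ⟨a, ha⟩ := hBne
    apply zero_mem_of_stab C hCcompact B a ha ?_ hfix
    intro g hg x hx
    have : Matrix.mulVec (g : Matrix (Fin d) (Fin d) ℝ) x ∈ (amap g B : Set (Fin d → ℝ)) := by
      rw [amap_coe]; exact ⟨x, hx, rfl⟩
    rwa [hstab g hg] at this
  -- main induction
  have main : ∀ n : ℕ, ∀ B : AffineSubspace ℝ (Fin d → ℝ),
      Module.finrank ℝ B.direction ≤ n → 0 < lam (B : Set (Fin d → ℝ)) →
      (0 : Fin d → ℝ) ∈ B := by
    intro n
    induction n with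
    | zero =>
      intro B hrank hBpos
      by_cases hc : ∃ g ∈ C, amap g B ≠ B ∧
          0 < lam ((amap g B ⊓ B : AffineSubspace ℝ (Fin d → ℝ)) : Set (Fin d → ℝ))
      · obtain ⟨g, hg, hne, hpos⟩ := hc
        have hnonempty : ((amap g B ⊓ B : AffineSubspace ℝ (Fin d → ℝ)) :
            Set (Fin d → ℝ)).Nonempty := by
          rw [Set.nonempty_iff_ne_empty]
          intro h
          rw [h] at hpos
          simp at hpos
        have hlt := finrank_lt_of_lt (inf_le_right (a := amap g B) (b := B))
          (inf_ne_of_amap_ne g B hne hnonempty) hnonempty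
        omega
      · push_neg at hc
        apply fixed_case B hBpos
        intro g hg
        by_cases h : amap g B = B
        · exact Or.inl h
        · right
          exact le_zero_iff.mp (hc g hg h)
    | succ n ih =>
      intro B hrank hBpos
      by_cases hc : ∃ g ∈ C, amap g B ≠ B ∧
          0 < lam ((amap g B ⊓ B : AffineSubspace ℝ (Fin d → ℝ)) : Set (Fin d → ℝ))
      · obtain ⟨g, hg, hne, hpos⟩ := hc
        have hnonempty : ((amap g B ⊓ B : AffineSubspace ℝ (Fin d → ℝ)) :
            Set (Fin d → ℝ)).Nonempty := by
          rw [Set.nonempty_iff_ne_empty]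
          intro h
          rw [h] at hpos
          simp at hpos
        have hlt := finrank_lt_of_lt (inf_le_right (a := amap g B) (b := B))
          (inf_ne_of_amap_ne g B hne hnonempty) hnonempty
        have h0 := ih (amap g B ⊓ B) (by omega) hpos
        exact inf_le_right (a := amap g B) (b := B) h0
      · push_neg at hc
        apply fixed_case B hBpos
        intro g hg
        by_cases h : amap g B = B
        · exact Or.inl h
        · right
          exact le_zero_iff.mp (hc g hg h)
  have h0 : (0 : Fin d → ℝ) ∈ A := main (Module.finrank ℝ A.direction) A le_rfl hA
  refine ⟨h0, A.direction, ?_⟩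
  ext x
  constructor
  · intro hx
    have := AffineSubspace.vsub_mem_direction hx h0
    simpa using this
  · intro hx
    have := AffineSubspace.vadd_mem_of_mem_direction (hx : x ∈ A.direction) h0
    simpa using this
end

section
/- Let d ≥ 2. Every Borel probability measure λ on ℝ^d admits a pure decomposition, and it is unique: if (λ_i)_{i∈I} and (κ_j)_{j∈J} are two pure decompositions of λ, then there is a bijection φ : I → J with κ_{φ(i)} = λ_i for all i ∈ I. -/
open MeasureTheory

/-- The (topological) support of a measure: points all of whose open neighbourhoods
have positive measure. -/
def msupp {X : Type*} [TopologicalSpace X] [MeasurableSpace X] (μ : Measure X) : Set X :=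
  {x | ∀ U : Set X, IsOpen U → x ∈ U → 0 < μ U}

/-- A nonzero finite Borel measure on `ℝ^d` is *pure* if every vector subspace of
positive measure contains the linear span of its support. -/
def IsPure {d : ℕ} (μ : Measure (Fin d → ℝ)) : Prop :=
  μ ≠ 0 ∧ IsFiniteMeasure μ ∧
    ∀ W : Submodule ℝ (Fin d → ℝ), 0 < μ (W : Set (Fin d → ℝ)) →
      Submodule.span ℝ (msupp μ) ≤ W

/-- A *pure decomposition* of a finite Borel measure `μ` on `ℝ^d`: a countable family of
nonzero pure finite measures, the linear spans of whose supports are pairwise distinct,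
summing to `μ`. -/
def IsPureDecomp {d : ℕ} {ι : Type*} (μ : Measure (Fin d → ℝ))
    (f : ι → Measure (Fin d → ℝ)) : Prop :=
  Countable ι ∧ (∀ i, IsPure (f i)) ∧
    (∀ i j : ι, i ≠ j →
      Submodule.span ℝ (msupp (f i)) ≠ Submodule.span ℝ (msupp (f j))) ∧
    μ = Measure.sum f

open Set
open scoped ENNReal NNReal

lemma exists_ae_cover {X : Type*} [MeasurableSpace X] (μ : Measure X) [IsFiniteMeasure μ]
    {ι : Type*} (V : ι → Set X) (hV : ∀ i, MeasurableSet (V i)) :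
    ∃ J : Set ι, J.Countable ∧ ∀ i, μ (V i \ ⋃ j ∈ J, V j) = 0 := by
  set c := ⨆ (J : Set ι) (_ : J.Countable), μ (⋃ j ∈ J, V j) with hc
  have hcle : c ≤ μ univ := by
    apply iSup_le; intro J; apply iSup_le; intro _; exact measure_mono (subset_univ _)
  have hctop : c ≠ ⊤ := (lt_of_le_of_lt hcle (measure_lt_top μ univ)).ne
  have hsingle : ∀ i : ι, μ (V i) ≤ c := by
    intro i
    refine le_trans ?_ (le_iSup₂ (f := fun (J : Set ι) (_ : J.Countable) => μ (⋃ j ∈ J, V j)) {i} (countable_singleton i))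
    simp
  rcases eq_or_ne c 0 with h0 | h0
  · refine ⟨∅, countable_empty, fun i => ?_⟩
    exact le_antisymm (le_trans (measure_mono diff_subset) (h0 ▸ hsingle i)) zero_le
  · have happrox : ∀ n : ℕ, ∃ J : Set ι, J.Countable ∧ c - ((n : ℝ≥0∞)+1)⁻¹ < μ (⋃ j ∈ J, V j) := by
      intro n
      have hlt : c - ((n : ℝ≥0∞)+1)⁻¹ < c := by
        apply ENNReal.sub_lt_self hctop h0
        simp
      rw [hc] at hlt
      rcases lt_iSup_iff.mp hlt with ⟨J, hJ⟩
      rcases lt_iSup_iff.mp hJ with ⟨hJc, hJ⟩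
      exact ⟨J, hJc, hJ⟩
    choose Js hJsc hJslt using happrox
    set J := ⋃ n, Js n with hJ
    have hJcount : J.Countable := countable_iUnion hJsc
    have hUle : ∀ (K : Set ι), K.Countable → μ (⋃ j ∈ K, V j) ≤ c :=
      fun K hK => le_iSup₂ (f := fun (J : Set ι) (_ : J.Countable) => μ (⋃ j ∈ J, V j)) K hK
    have hUeq : μ (⋃ j ∈ J, V j) = c := by
      apply le_antisymm (hUle J hJcount)
      apply ENNReal.le_of_forall_pos_le_add
      intro ε hε _
      obtain ⟨n, hn⟩ := ENNReal.exists_inv_nat_lt (a := (ε : ℝ≥0∞)) (by exact_mod_cast hε.ne')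
      have h1 : c - ((n : ℝ≥0∞)+1)⁻¹ < μ (⋃ j ∈ Js n, V j) := hJslt n
      have h2 : μ (⋃ j ∈ Js n, V j) ≤ μ (⋃ j ∈ J, V j) := by
        apply measure_mono; apply biUnion_subset_biUnion_left; exact subset_iUnion Js n
      have h3 : c ≤ μ (⋃ j ∈ J, V j) + ((n : ℝ≥0∞)+1)⁻¹ :=
        tsub_le_iff_right.mp (le_of_lt (lt_of_lt_of_le h1 h2))
      refine le_trans h3 (add_le_add le_rfl ?_)
      refine le_trans ?_ hn.le
      apply ENNReal.inv_le_inv.mpr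
      simp
    have hUmble : MeasurableSet (⋃ j ∈ J, V j) :=
      MeasurableSet.biUnion hJcount (fun j _ => hV j)
    refine ⟨J, hJcount, fun i => ?_⟩
    have hdisj : Disjoint (⋃ j ∈ J, V j) (V i \ ⋃ j ∈ J, V j) := disjoint_sdiff_right
    have hm : MeasurableSet (V i \ ⋃ j ∈ J, V j) := (hV i).diff hUmble
    have hadd : μ ((⋃ j ∈ J, V j) ∪ (V i \ ⋃ j ∈ J, V j)) = c + μ (V i \ ⋃ j ∈ J, V j) := by
      rw [measure_union hdisj hm, hUeq]
    have hinsert : (⋃ j ∈ J, V j) ∪ (V i \ ⋃ j ∈ J, V j) = ⋃ j ∈ insert i J, V j := by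
      rw [union_diff_self]
      simp [biUnion_insert, union_comm]
    have hle : c + μ (V i \ ⋃ j ∈ J, V j) ≤ c := by
      rw [← hadd, hinsert]
      exact hUle _ (hJcount.insert i)
    by_contra hne
    have : c < c + μ (V i \ ⋃ j ∈ J, V j) :=
      ENNReal.lt_add_right hctop hne
    exact absurd hle (not_le.mpr this)

lemma msupp_compl_null {X : Type*} [TopologicalSpace X] [MeasurableSpace X]
    [SecondCountableTopology X] (μ : Measure X) : μ (msupp μ)ᶜ = 0 := by
  have h1 : (msupp μ)ᶜ = ⋃₀ {U : Set X | IsOpen U ∧ μ U = 0} := by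
    ext x
    simp only [mem_compl_iff, msupp, mem_setOf_eq, not_forall, mem_sUnion]
    constructor
    · rintro ⟨U, hU, hx, hpos⟩
      exact ⟨U, ⟨hU, by simpa using hpos⟩, hx⟩
    · rintro ⟨U, ⟨hU, h0⟩, hx⟩
      exact ⟨U, hU, hx, by simp [h0]⟩
  obtain ⟨T, hTc, hTsub, hTeq⟩ := TopologicalSpace.isOpen_sUnion_countable
    {U : Set X | IsOpen U ∧ μ U = 0} (fun U hU => hU.1)
  rw [h1, ← hTeq, measure_sUnion_null_iff hTc]
  exact fun U hU => (hTsub hU).2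

lemma msupp_subset_of_closed {X : Type*} [TopologicalSpace X] [MeasurableSpace X]
    {μ : Measure X} {s : Set X} (hs : IsClosed s) (h : μ sᶜ = 0) : msupp μ ⊆ s := by
  intro x hx
  by_contra hxs
  have := hx sᶜ hs.isOpen_compl hxs
  rw [h] at this
  exact lt_irrefl 0 this

section Core
variable {d : ℕ}

noncomputable def UU (J : Submodule ℝ (Fin d → ℝ) → Set (Submodule ℝ (Fin d → ℝ)))
    (W : Submodule ℝ (Fin d → ℝ)) : Set (Fin d → ℝ) :=
  ⋃ V ∈ J W, (V : Set (Fin d → ℝ))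

noncomputable def AA (J : Submodule ℝ (Fin d → ℝ) → Set (Submodule ℝ (Fin d → ℝ)))
    (W : Submodule ℝ (Fin d → ℝ)) : Set (Fin d → ℝ) :=
  (W : Set (Fin d → ℝ)) \ UU J W

variable (lam : Measure (Fin d → ℝ)) [IsFiniteMeasure lam]

lemma exists_J : ∃ J : Submodule ℝ (Fin d → ℝ) → Set (Submodule ℝ (Fin d → ℝ)),
    (∀ W, (J W).Countable) ∧ (∀ W, ∀ V ∈ J W, V < W) ∧
    (∀ (W V : Submodule ℝ (Fin d → ℝ)), V < W → 0 < lam ↑V →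
      lam (↑V \ UU J W) = 0) := by
  have key : ∀ W : Submodule ℝ (Fin d → ℝ), ∃ JW : Set (Submodule ℝ (Fin d → ℝ)),
      JW.Countable ∧ (∀ V ∈ JW, V < W) ∧
      (∀ V : Submodule ℝ (Fin d → ℝ), V < W → 0 < lam ↑V →
        lam ((V : Set (Fin d → ℝ)) \ ⋃ V' ∈ JW, (V' : Set (Fin d → ℝ))) = 0) := by
    intro W
    obtain ⟨J0, hJ0c, hJ0⟩ := exists_ae_cover lam
      (fun V : {V : Submodule ℝ (Fin d → ℝ) // V < W ∧ 0 < lam ↑V} =>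
        ((V : Submodule ℝ (Fin d → ℝ)) : Set (Fin d → ℝ)))
      (fun V => (Submodule.closed_of_finiteDimensional _).measurableSet)
    refine ⟨Subtype.val '' J0, hJ0c.image _, ?_, ?_⟩
    · rintro V ⟨v, hv, rfl⟩; exact v.2.1
    · intro V hVW hVpos
      have := hJ0 ⟨V, hVW, hVpos⟩
      convert this using 3
      rw [biUnion_image]
  choose Jf h1 h2 h3 using key
  exact ⟨Jf, h1, h2, fun W V hlt hpos => h3 W V hlt hpos⟩

variable (J : Submodule ℝ (Fin d → ℝ) → Set (Submodule ℝ (Fin d → ℝ)))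
  (hJc : ∀ W, (J W).Countable)
  (hJlt : ∀ W, ∀ V ∈ J W, V < W)
  (hJcover : ∀ (W V : Submodule ℝ (Fin d → ℝ)), V < W → 0 < lam ↑V →
      lam (↑V \ UU J W) = 0)

include hJc in
lemma meas_UU (W : Submodule ℝ (Fin d → ℝ)) : MeasurableSet (UU J W) :=
  MeasurableSet.biUnion (hJc W)
    (fun V _ => (Submodule.closed_of_finiteDimensional _).measurableSet)

include hJc in
lemma meas_AA (W : Submodule ℝ (Fin d → ℝ)) : MeasurableSet (AA J W) :=
  ((Submodule.closed_of_finiteDimensional _).measurableSet).diff (meas_UU J hJc W)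


include hJcover in
lemma le_of_inter_AA_pos {W V : Submodule ℝ (Fin d → ℝ)} (s : Set (Fin d → ℝ))
    (hsV : s ⊆ V) (hpos : 0 < lam (s ∩ AA J W)) : W ≤ V := by
  by_contra hWV
  have hinf : V ⊓ W < W := lt_of_le_of_ne inf_le_right (fun h => hWV (h ▸ inf_le_left))
  have hsub : s ∩ AA J W ⊆ (↑(V ⊓ W) : Set (Fin d → ℝ)) \ UU J W := by
    rintro x ⟨hxs, hxW, hxU⟩
    exact ⟨⟨hsV hxs, hxW⟩, hxU⟩
  rcases eq_or_lt_of_le (zero_le : 0 ≤ lam ↑(V ⊓ W)) with h0 | h0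
  · have : lam (s ∩ AA J W) = 0 :=
      measure_mono_null (hsub.trans diff_subset) h0.symm
    exact absurd this hpos.ne'
  · have := hJcover W (V ⊓ W) hinf h0
    exact absurd (measure_mono_null hsub this) hpos.ne'

include hJcover in
lemma ae_disjoint_AA {W W' : Submodule ℝ (Fin d → ℝ)} (h : W ≠ W') :
    lam (AA J W ∩ AA J W') = 0 := by
  rcases (inf_le_left : W ⊓ W' ≤ W).lt_or_eq with hlt | heq
  · have hsub : AA J W ∩ AA J W' ⊆ (↑(W ⊓ W') : Set (Fin d → ℝ)) \ UU J W := by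
      rintro x ⟨⟨hxW, hxU⟩, ⟨hxW', _⟩⟩
      exact ⟨⟨hxW, hxW'⟩, hxU⟩
    rcases eq_or_lt_of_le (zero_le : 0 ≤ lam ↑(W ⊓ W')) with h0 | h0
    · exact measure_mono_null (hsub.trans diff_subset) h0.symm
    · exact measure_mono_null hsub (hJcover W (W ⊓ W') hlt h0)
  · have hWW' : W < W' := lt_of_le_of_ne (heq ▸ inf_le_right) h
    have hsub : AA J W ∩ AA J W' ⊆ (↑W : Set (Fin d → ℝ)) \ UU J W' := by
      rintro x ⟨⟨hxW, _⟩, ⟨_, hxU'⟩⟩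
      exact ⟨hxW, hxU'⟩
    rcases eq_or_lt_of_le (zero_le : 0 ≤ lam (↑W : Set (Fin d → ℝ))) with h0 | h0
    · exact measure_mono_null (hsub.trans diff_subset) h0.symm
    · exact measure_mono_null hsub (hJcover W' W hWW' h0)

include hJc hJcover in
lemma Gam_countable : {W : Submodule ℝ (Fin d → ℝ) | 0 < lam (AA J W)}.Countable :=
  Measure.countable_meas_pos_of_disjoint_iUnion₀
    (fun W => (meas_AA J hJc W).nullMeasurableSet)
    (fun _ _ hne => ae_disjoint_AA lam J hJcover hne)

include hJc hJlt in
lemma full_meas : ∀ (n : ℕ) (W : Submodule ℝ (Fin d → ℝ)), Module.finrank ℝ W = n →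
    lam ((W : Set (Fin d → ℝ)) \
      ⋃ W' ∈ {W'' : Submodule ℝ (Fin d → ℝ) | 0 < lam (AA J W'') ∧ W'' ≤ W}, AA J W') = 0 := by
  intro n
  induction n using Nat.strong_induction_on with
  | _ n ih =>
    intro W hW
    set SS : Submodule ℝ (Fin d → ℝ) → Set (Fin d → ℝ) := fun W =>
      ⋃ W' ∈ {W'' : Submodule ℝ (Fin d → ℝ) | 0 < lam (AA J W'') ∧ W'' ≤ W}, AA J W' with hSS
    have hmono : ∀ {V W : Submodule ℝ (Fin d → ℝ)}, V ≤ W → SS V ⊆ SS W := by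
      intro V W hVW
      apply biUnion_subset_biUnion_left
      exact fun W'' ⟨h1, h2⟩ => ⟨h1, h2.trans hVW⟩
    have hincl : (W : Set (Fin d → ℝ)) \ SS W ⊆
        (AA J W \ SS W) ∪ ⋃ V ∈ J W, ((V : Set (Fin d → ℝ)) \ SS V) := by
      intro x ⟨hxW, hxS⟩
      by_cases hxU : x ∈ UU J W
      · right
        obtain ⟨V, hV, hxV⟩ := by
          simpa only [UU, mem_iUnion, exists_prop] using hxU
        exact mem_biUnion hV ⟨hxV, fun hx => hxS (hmono (hJlt W V hV).le hx)⟩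
      · left; exact ⟨⟨hxW, hxU⟩, hxS⟩
    have h1 : lam (AA J W \ SS W) = 0 := by
      rcases eq_or_lt_of_le (zero_le : 0 ≤ lam (AA J W)) with h0 | h0
      · exact measure_mono_null diff_subset h0.symm
      · have : AA J W ⊆ SS W := subset_biUnion_of_mem (u := AA J) ⟨h0, le_rfl⟩
        rw [diff_eq_empty.mpr this]
        exact measure_empty
    have h2 : lam (⋃ V ∈ J W, ((V : Set (Fin d → ℝ)) \ SS V)) = 0 := by
      rw [measure_biUnion_null_iff (hJc W)]
      intro V hV
      have hVfin : Module.finrank ℝ V < n := by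
        rw [← hW]
        exact Submodule.finrank_lt_finrank_of_lt (hJlt W V hV)
      exact ih _ hVfin V rfl
    exact measure_mono_null hincl (measure_union_null h1 h2)

include hJc hJlt hJcover in
lemma sum_eq :
    lam = Measure.sum (fun W : {W : Submodule ℝ (Fin d → ℝ) | 0 < lam (AA J W)} =>
      lam.restrict (AA J ↑W)) := by
  have hGamc : {W : Submodule ℝ (Fin d → ℝ) | 0 < lam (AA J W)}.Countable :=
    Gam_countable lam J hJc hJcover
  have : Countable {W : Submodule ℝ (Fin d → ℝ) | 0 < lam (AA J W)} := hGamc.to_subtype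
  ext s hs
  rw [Measure.sum_apply _ hs]
  simp_rw [Measure.restrict_apply hs]
  set T : Set (Fin d → ℝ) :=
    ⋃ W : {W : Submodule ℝ (Fin d → ℝ) | 0 < lam (AA J W)}, AA J ↑W with hT
  have hTm : MeasurableSet T := MeasurableSet.iUnion (fun W => meas_AA J hJc ↑W)
  have hTfull : lam Tᶜ = 0 := by
    have h7a := full_meas lam J hJc hJlt (Module.finrank ℝ (⊤ : Submodule ℝ (Fin d → ℝ))) ⊤ rfl
    apply measure_mono_null _ h7a
    intro x hx
    refine ⟨by simp, ?_⟩
    intro hxT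
    apply hx
    simp only [mem_iUnion, exists_prop] at hxT
    obtain ⟨W', hW'mem, hxW'⟩ := hxT
    exact mem_iUnion.mpr ⟨⟨W', hW'mem.1⟩, hxW'⟩
  have hsplit : lam s = lam (s ∩ T) + lam (s \ T) := (measure_inter_add_diff s hTm).symm
  have hdiff : lam (s \ T) = 0 :=
    measure_mono_null (fun x hx => hx.2) hTfull
  have hinter : lam (s ∩ T) = ∑' (W : {W : Submodule ℝ (Fin d → ℝ) | 0 < lam (AA J W)}),
      lam (s ∩ AA J ↑W) := by
    rw [hT, inter_iUnion]
    apply measure_iUnion₀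
    · intro W W' hne
      have hWW' : (W : Submodule ℝ (Fin d → ℝ)) ≠ ↑W' := fun h => hne (Subtype.ext h)
      exact measure_mono_null
        (inter_subset_inter inter_subset_right inter_subset_right)
        (ae_disjoint_AA lam J hJcover hWW')
    · exact fun W => (hs.inter (meas_AA J hJc ↑W)).nullMeasurableSet
  rw [hsplit, hdiff, hinter, add_zero]

include hJc hJcover in
lemma pure_piece (W : Submodule ℝ (Fin d → ℝ)) (h : 0 < lam (AA J W)) :
    (lam.restrict (AA J W) ≠ 0 ∧ IsFiniteMeasure (lam.restrict (AA J W)) ∧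
      ∀ V : Submodule ℝ (Fin d → ℝ), 0 < lam.restrict (AA J W) (V : Set (Fin d → ℝ)) →
        Submodule.span ℝ (msupp (lam.restrict (AA J W))) ≤ V) ∧
    Submodule.span ℝ (msupp (lam.restrict (AA J W))) = W := by
  set μ := lam.restrict (AA J W) with hμ
  have hrestr : ∀ t : Set (Fin d → ℝ), μ t = lam (t ∩ AA J W) := fun t =>
    Measure.restrict_apply' (meas_AA J hJc W)
  have hμuniv : μ univ = lam (AA J W) := by rw [hrestr]; simp
  have hconc : μ ((W : Set (Fin d → ℝ)))ᶜ = 0 := by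
    rw [hrestr]
    apply measure_mono_null _ (measure_empty (μ := lam))
    rintro x ⟨hxc, hxW, _⟩
    exact hxc hxW
  have hmsupp : msupp μ ⊆ (W : Set (Fin d → ℝ)) :=
    msupp_subset_of_closed (Submodule.closed_of_finiteDimensional _) hconc
  have hspanle : Submodule.span ℝ (msupp μ) ≤ W := Submodule.span_le.mpr hmsupp
  have hposle : ∀ V : Submodule ℝ (Fin d → ℝ), 0 < μ (V : Set (Fin d → ℝ)) → W ≤ V := by
    intro V hV
    rw [hrestr] at hV
    exact le_of_inter_AA_pos lam J hJcover _ (subset_refl _) hV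
  refine ⟨⟨?_, inferInstance, fun V hV => hspanle.trans (hposle V hV)⟩, ?_⟩
  · intro h0
    have h00 : μ univ = 0 := by rw [h0]; simp
    rw [hμuniv] at h00
    exact h.ne' h00
  · refine le_antisymm hspanle (hposle _ ?_)
    have hcompl : μ ((Submodule.span ℝ (msupp μ) : Set (Fin d → ℝ)))ᶜ = 0 := by
      apply measure_mono_null (compl_subset_compl.mpr Submodule.subset_span)
      exact msupp_compl_null μ
    have : 0 < μ univ := hμuniv ▸ h
    have hsplit := measure_union_le (μ := μ)
      (Submodule.span ℝ (msupp μ) : Set (Fin d → ℝ)) ((Submodule.span ℝ (msupp μ) : Set (Fin d → ℝ)))ᶜ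
    rw [union_compl_self, hcompl, add_zero] at hsplit
    exact lt_of_lt_of_le this hsplit

include hJc hJlt hJcover in
lemma decomp_analysis {ι : Type} (f : ι → Measure (Fin d → ℝ)) (hf : IsPureDecomp lam f) :
    (∀ i, 0 < lam (AA J (Submodule.span ℝ (msupp (f i)))) ∧
      f i = lam.restrict (AA J (Submodule.span ℝ (msupp (f i))))) ∧
    (∀ W : Submodule ℝ (Fin d → ℝ), 0 < lam (AA J W) →
      ∃ i, Submodule.span ℝ (msupp (f i)) = W) := by
  obtain ⟨hcount, hpure, hdist, hsum⟩ := hf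
  set hW : ι → Submodule ℝ (Fin d → ℝ) := fun i => Submodule.span ℝ (msupp (f i)) with hWdef
  have hle : ∀ i, ∀ t : Set (Fin d → ℝ), f i t ≤ lam t := by
    intro i t
    rw [hsum]
    exact Measure.le_iff'.mp (Measure.le_sum f i) t
  have hCompl : ∀ i, f i ((hW i : Set (Fin d → ℝ)))ᶜ = 0 := fun i =>
    measure_mono_null (compl_subset_compl.mpr Submodule.subset_span) (msupp_compl_null (f i))
  have huniv : ∀ i, 0 < f i univ := fun i =>
    Measure.measure_univ_pos.mpr (hpure i).1
  have hpure' : ∀ i (V : Submodule ℝ (Fin d → ℝ)), 0 < f i ↑V → hW i ≤ V :=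
    fun i V h => (hpure i).2.2 V h
  have hnull : ∀ i (V : Submodule ℝ (Fin d → ℝ)), ¬ hW i ≤ V → f i ↑V = 0 := by
    intro i V h
    by_contra h0
    exact h (hpure' i V (pos_iff_ne_zero.mpr h0))
  have hfW : ∀ i, 0 < f i ↑(hW i) := by
    intro i
    have h1 : f i univ ≤ f i ↑(hW i) + f i ((hW i : Set (Fin d → ℝ)))ᶜ := by
      rw [← union_compl_self (hW i : Set (Fin d → ℝ))]
      exact measure_union_le _ _
    rw [hCompl i, add_zero] at h1
    exact lt_of_lt_of_le (huniv i) h1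
  -- (d)
  have hd : ∀ i (W : Submodule ℝ (Fin d → ℝ)), hW i ≠ W → f i (AA J W) = 0 := by
    intro i W hne
    by_cases hleW : hW i ≤ W
    · have hlt : hW i < W := lt_of_le_of_ne hleW hne
      have hlam : 0 < lam ↑(hW i) := lt_of_lt_of_le (hfW i) (hle i _)
      have hcov : lam ((hW i : Set (Fin d → ℝ)) \ UU J W) = 0 := hJcover W (hW i) hlt hlam
      have hfcov : f i ((hW i : Set (Fin d → ℝ)) \ UU J W) = 0 :=
        le_antisymm (le_trans (hle i _) hcov.le) zero_le
      have hsub : AA J W ⊆ ((hW i : Set (Fin d → ℝ)) \ UU J W) ∪ ((hW i : Set (Fin d → ℝ)))ᶜ := by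
        rintro x ⟨hxW, hxU⟩
        by_cases hx : x ∈ (hW i : Set (Fin d → ℝ))
        · exact Or.inl ⟨hx, hxU⟩
        · exact Or.inr hx
      apply measure_mono_null hsub
      exact measure_union_null hfcov (hCompl i)
    · exact measure_mono_null diff_subset (hnull i W hleW)
  -- (e)
  have he : ∀ i, f i (AA J (hW i))ᶜ = 0 := by
    intro i
    have hUnull : f i (UU J (hW i)) = 0 := by
      rw [UU, measure_biUnion_null_iff (hJc (hW i))]
      intro V hV
      exact hnull i V (hJlt (hW i) V hV).not_ge
    have hcomp : (AA J (hW i))ᶜ ⊆ ((hW i : Set (Fin d → ℝ)))ᶜ ∪ UU J (hW i) := by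
      intro x hx
      by_cases h1 : x ∈ (hW i : Set (Fin d → ℝ))
      · by_cases h2 : x ∈ UU J (hW i)
        · exact Or.inr h2
        · exact absurd ⟨h1, h2⟩ hx
      · exact Or.inl h1
    exact measure_mono_null hcomp (measure_union_null (hCompl i) hUnull)
  have hfAA : ∀ i, f i (AA J (hW i)) = f i univ := by
    intro i
    have := measure_inter_add_diff (μ := f i) univ (meas_AA J hJc (hW i))
    rw [univ_inter] at this
    have h2 : f i (univ \ AA J (hW i)) = 0 :=
      measure_mono_null (fun x hx => hx.2) (he i)
    rw [h2, add_zero] at this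
    exact this
  -- (f)
  have hff : ∀ i, f i = lam.restrict (AA J (hW i)) := by
    intro i
    ext s hs
    rw [Measure.restrict_apply hs, hsum,
      Measure.sum_apply _ (hs.inter (meas_AA J hJc (hW i)))]
    rw [tsum_eq_single i ?single]
    case single =>
      intro j hj
      exact measure_mono_null inter_subset_right (hd j (hW i) (hdist j i hj))
    have := measure_inter_add_diff (μ := f i) s (meas_AA J hJc (hW i))
    have h2 : f i (s \ AA J (hW i)) = 0 :=
      measure_mono_null (fun x hx => hx.2) (he i)
    rw [h2, add_zero] at this
    exact this.symm
  -- (g)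
  have hg : ∀ i, 0 < lam (AA J (hW i)) := by
    intro i
    refine lt_of_lt_of_le ?_ (hle i (AA J (hW i)))
    rw [hfAA i]
    exact huniv i
  refine ⟨fun i => ⟨hg i, hff i⟩, ?_⟩
  -- (h)
  intro W hpos
  by_contra hnone
  push_neg at hnone
  have : lam (AA J W) = 0 := by
    rw [hsum, Measure.sum_apply _ (meas_AA J hJc W)]
    rw [ENNReal.tsum_eq_zero]
    exact fun j => hd j W (hnone j)
  exact hpos.ne' this

end Core


/-- For `d ≥ 2`, every Borel probability measure on `ℝ^d` admits a pure
decomposition, unique up to a bijection of the index sets. -/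
theorem stmt3 (d : ℕ) (hd : 2 ≤ d)
    (lam : Measure (Fin d → ℝ)) [IsProbabilityMeasure lam] :
    (∃ (ι : Type) (f : ι → Measure (Fin d → ℝ)), IsPureDecomp lam f) ∧
    (∀ (ι κ : Type) (f : ι → Measure (Fin d → ℝ)) (g : κ → Measure (Fin d → ℝ)),
      IsPureDecomp lam f → IsPureDecomp lam g →
      ∃ φ : ι ≃ κ, ∀ i : ι, g (φ i) = f i) := by
  obtain ⟨J, hJc, hJlt, hJcover⟩ := exists_J lam
  set Γ : Set (Submodule ℝ (Fin d → ℝ)) := {W | 0 < lam (AA J W)} with hΓ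
  have hΓc : Γ.Countable := Gam_countable lam J hJc hJcover
  have hΓcount : Countable ↥Γ := hΓc.to_subtype
  set F : ↥Γ → Measure (Fin d → ℝ) := fun W => lam.restrict (AA J ↑W) with hF
  have hFdecomp : IsPureDecomp lam F := by
    refine ⟨inferInstance, ?_, ?_, sum_eq lam J hJc hJlt hJcover⟩
    · intro W
      exact (pure_piece lam J hJc hJcover ↑W W.2).1
    · intro W W' hne
      have h2 := (pure_piece lam J hJc hJcover ↑W W.2).2
      have h2' := (pure_piece lam J hJc hJcover ↑W' W'.2).2
      rw [show msupp (F W) = msupp (lam.restrict (AA J ↑W)) from rfl,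
        show msupp (F W') = msupp (lam.restrict (AA J ↑W')) from rfl, h2, h2']
      exact fun h => hne (Subtype.ext h)
  refine ⟨⟨↥Γ, F, hFdecomp⟩, ?_⟩
  intro ι κ f g hf hg
  obtain ⟨hf1, hf2⟩ := decomp_analysis lam J hJc hJlt hJcover f hf
  obtain ⟨hg1, hg2⟩ := decomp_analysis lam J hJc hJlt hJcover g hg
  set Φf : ι → ↥Γ := fun i => ⟨Submodule.span ℝ (msupp (f i)), (hf1 i).1⟩ with hΦf
  set Φg : κ → ↥Γ := fun j => ⟨Submodule.span ℝ (msupp (g j)), (hg1 j).1⟩ with hΦg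
  have hfinj : Function.Bijective Φf := by
    constructor
    · intro i i' h
      by_contra hne
      exact hf.2.2.1 i i' hne (congrArg Subtype.val h)
    · intro W
      obtain ⟨i, hi⟩ := hf2 ↑W W.2
      exact ⟨i, Subtype.ext hi⟩
  have hginj : Function.Bijective Φg := by
    constructor
    · intro j j' h
      by_contra hne
      exact hg.2.2.1 j j' hne (congrArg Subtype.val h)
    · intro W
      obtain ⟨j, hj⟩ := hg2 ↑W W.2
      exact ⟨j, Subtype.ext hj⟩
  set ef : ι ≃ ↥Γ := Equiv.ofBijective Φf hfinj with hef
  set eg : κ ≃ ↥Γ := Equiv.ofBijective Φg hginj with heg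
  refine ⟨ef.trans eg.symm, ?_⟩
  intro i
  have h1 := (hg1 (eg.symm (ef i))).2
  have h2 := (hf1 i).2
  have h3 : Submodule.span ℝ (msupp (g (eg.symm (ef i)))) = Submodule.span ℝ (msupp (f i)) := by
    have h4 : Φg (eg.symm (ef i)) = ef i := eg.apply_symm_apply (ef i)
    have h5 := congrArg Subtype.val h4
    exact h5
  show g (eg.symm (ef i)) = f i
  rw [h1, h3, ← h2]
end

section
/- Let n ≥ 2, let λ be a Borel probability measure on ℝ^n, and let (λ_i)_{i∈I} be a pure decomposition of λ. If C is a connected subgroup of GL(n,ℝ) such that g_*λ = λ for every g ∈ C, then g_*λ_i = λ_i for every g ∈ C and every i ∈ I. -/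
open MeasureTheory Matrix

namespace Stmt4Aux

open Set

variable {n : ℕ}

/-- The span of the support of a measure. -/
noncomputable def spanOf (μ : Measure (Fin n → ℝ)) : Submodule ℝ (Fin n → ℝ) :=
  Submodule.span ℝ (msupp μ)

lemma measure_compl_msupp (μ : Measure (Fin n → ℝ)) : μ (msupp μ)ᶜ = 0 := by
  obtain ⟨T, hTc, hTsub, hTU⟩ := TopologicalSpace.isOpen_sUnion_countable
      {U : Set (Fin n → ℝ) | IsOpen U ∧ μ U = 0} (fun s hs => hs.1)
  have h1 : (msupp μ)ᶜ ⊆ ⋃₀ {U : Set (Fin n → ℝ) | IsOpen U ∧ μ U = 0} := by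
    intro x hx
    simp only [msupp, mem_compl_iff, mem_setOf_eq, not_forall] at hx
    obtain ⟨U, hU, hxU, hpos⟩ := hx
    exact ⟨U, ⟨hU, by simpa using hpos⟩, hxU⟩
  rw [← hTU] at h1
  exact measure_mono_null h1 ((measure_sUnion_null_iff hTc).2 fun s hs => (hTsub hs).2)

lemma measure_compl_spanOf (μ : Measure (Fin n → ℝ)) :
    μ ((spanOf μ : Set (Fin n → ℝ)))ᶜ = 0 :=
  measure_mono_null (compl_subset_compl.2 Submodule.subset_span) (measure_compl_msupp μ)

lemma pure_null {μ : Measure (Fin n → ℝ)} (hμ : IsPure μ) {W : Submodule ℝ (Fin n → ℝ)}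
    (hW : ¬ spanOf μ ≤ W) : μ (W : Set (Fin n → ℝ)) = 0 := by
  by_contra h
  exact hW (hμ.2.2 W (pos_iff_ne_zero.2 h))

/-- The part of `V` not covered by members of `𝒰` that do not contain `V`. -/
def Tset (𝒰 : Set (Submodule ℝ (Fin n → ℝ))) (V : Submodule ℝ (Fin n → ℝ)) :
    Set (Fin n → ℝ) :=
  (V : Set (Fin n → ℝ)) \ ⋃ U ∈ {U ∈ 𝒰 | ¬ V ≤ U}, (U : Set (Fin n → ℝ))

lemma measurableSet_Tset {𝒰 : Set (Submodule ℝ (Fin n → ℝ))} (h𝒰 : 𝒰.Countable)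
    (V : Submodule ℝ (Fin n → ℝ)) : MeasurableSet (Tset 𝒰 V) := by
  refine MeasurableSet.diff (Submodule.closed_of_finiteDimensional V).measurableSet ?_
  exact MeasurableSet.biUnion (h𝒰.mono (sep_subset _ _))
    (fun U _ => (Submodule.closed_of_finiteDimensional U).measurableSet)

lemma pure_compl_Tset_null {μ : Measure (Fin n → ℝ)} (hμ : IsPure μ)
    {𝒰 : Set (Submodule ℝ (Fin n → ℝ))} (h𝒰 : 𝒰.Countable) :
    μ (Tset 𝒰 (spanOf μ))ᶜ = 0 := by
  have hsub : (Tset 𝒰 (spanOf μ))ᶜ ⊆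
      ((spanOf μ : Set (Fin n → ℝ)))ᶜ ∪ ⋃ U ∈ {U ∈ 𝒰 | ¬ spanOf μ ≤ U}, (U : Set (Fin n → ℝ)) := by
    intro x hx
    by_cases hxV : x ∈ (spanOf μ : Set (Fin n → ℝ))
    · right
      simp only [Tset, mem_compl_iff, mem_diff, not_and, not_not] at hx
      exact hx hxV
    · exact Or.inl hxV
  refine measure_mono_null hsub (measure_union_null (measure_compl_spanOf μ) ?_)
  refine (measure_biUnion_null_iff (h𝒰.mono (sep_subset _ _))).2 ?_
  intro U hU
  exact pure_null hμ hU.2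

lemma restrict_Tset_eq {ι : Type} [Countable ι] {f : ι → Measure (Fin n → ℝ)}
    (hpure : ∀ i, IsPure (f i))
    (hdist : ∀ i j : ι, i ≠ j → spanOf (f i) ≠ spanOf (f j))
    {𝒰 : Set (Submodule ℝ (Fin n → ℝ))} (h𝒰 : 𝒰.Countable)
    (hsub : ∀ i, spanOf (f i) ∈ 𝒰) (i : ι) :
    (Measure.sum f).restrict (Tset 𝒰 (spanOf (f i))) = f i := by
  have hT := measurableSet_Tset h𝒰 (spanOf (f i))
  rw [Measure.restrict_sum _ hT]
  have hzero : ∀ j : ι, j ≠ i → (f j).restrict (Tset 𝒰 (spanOf (f i))) = 0 := by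
    intro j hj
    rw [Measure.restrict_eq_zero]
    by_cases hpos : f j ((spanOf (f i) : Set (Fin n → ℝ))) = 0
    · exact measure_mono_null diff_subset hpos
    · have hle : spanOf (f j) ≤ spanOf (f i) := (hpure j).2.2 _ (pos_iff_ne_zero.2 hpos)
      have hne : ¬ spanOf (f i) ≤ spanOf (f j) := fun h =>
        hdist j i hj (le_antisymm hle h)
      have hTsub : Tset 𝒰 (spanOf (f i)) ⊆ ((spanOf (f j) : Set (Fin n → ℝ)))ᶜ := by
        intro x hx hxj
        exact hx.2 (mem_biUnion ⟨hsub j, hne⟩ hxj)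
      exact measure_mono_null hTsub (measure_compl_spanOf (f j))
  have hself : (f i).restrict (Tset 𝒰 (spanOf (f i))) = f i := by
    refine Measure.restrict_eq_self_of_ae_mem ?_
    exact mem_ae_iff.2 (pure_compl_Tset_null (hpure i) h𝒰)
  ext s hs
  rw [Measure.sum_apply _ hs, tsum_eq_single i (fun j hj => by rw [hzero j hj]; simp), hself]

lemma exists_measure_eq {ι κ : Type} [Countable ι] [Countable κ]
    {f : ι → Measure (Fin n → ℝ)} {h : κ → Measure (Fin n → ℝ)}
    (hpf : ∀ i, IsPure (f i)) (hdf : ∀ i j : ι, i ≠ j → spanOf (f i) ≠ spanOf (f j))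
    (hph : ∀ j, IsPure (h j)) (hdh : ∀ i j : κ, i ≠ j → spanOf (h i) ≠ spanOf (h j))
    (heq : Measure.sum f = Measure.sum h) (i : ι) : ∃ j, h j = f i := by
  classical
  set 𝒰 : Set (Submodule ℝ (Fin n → ℝ)) :=
    (range fun i => spanOf (f i)) ∪ (range fun j => spanOf (h j)) with h𝒰def
  have h𝒰 : 𝒰.Countable := (countable_range _).union (countable_range _)
  have hsubf : ∀ i, spanOf (f i) ∈ 𝒰 := fun i => Or.inl (mem_range_self i)
  have hsubh : ∀ j, spanOf (h j) ∈ 𝒰 := fun j => Or.inr (mem_range_self j)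
  set T := Tset 𝒰 (spanOf (f i)) with hTdef
  have hT : MeasurableSet T := measurableSet_Tset h𝒰 _
  have hfi : (Measure.sum f).restrict T = f i := restrict_Tset_eq hpf hdf h𝒰 hsubf i
  have hfiT : f i T ≠ 0 := by
    intro h0
    have h1 : f i Tᶜ = 0 := pure_compl_Tset_null (hpf i) h𝒰
    have h2 : f i Set.univ = 0 := by
      have := measure_union_null h0 h1
      simpa [Set.union_compl_self] using this
    exact (hpf i).1 (MeasureTheory.Measure.measure_univ_eq_zero.1 h2)
  have hTpos : Measure.sum h T ≠ 0 := by
    rw [← heq]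
    intro h0
    exact hfiT (le_antisymm (le_trans (Measure.le_iff'.1 (Measure.le_sum f i) T) h0.le)
      (zero_le))
  have hex : ∃ j, h j T ≠ 0 := by
    by_contra hc
    push_neg at hc
    rw [Measure.sum_apply _ hT] at hTpos
    exact hTpos (by simp [hc])
  obtain ⟨j, hj⟩ := hex
  have hVj : spanOf (h j) ≤ spanOf (f i) := by
    refine (hph j).2.2 _ (pos_iff_ne_zero.2 ?_)
    intro h0
    exact hj (measure_mono_null diff_subset h0)
  have hge : spanOf (f i) ≤ spanOf (h j) := by
    by_contra hne
    have hTsub : T ⊆ ((spanOf (h j) : Set (Fin n → ℝ)))ᶜ := by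
      intro x hx hxj
      exact hx.2 (mem_biUnion ⟨hsubh j, hne⟩ hxj)
    exact hj (measure_mono_null hTsub (measure_compl_spanOf (h j)))
  have hVeq : spanOf (h j) = spanOf (f i) := le_antisymm hVj hge
  refine ⟨j, ?_⟩
  have hhj := restrict_Tset_eq hph hdh h𝒰 hsubh j
  rw [hVeq] at hhj
  have hfi' : (Measure.sum h).restrict T = f i := by rwa [heq] at hfi
  exact hhj.symm.trans hfi'

section Map

variable (e : (Fin n → ℝ) ≃L[ℝ] (Fin n → ℝ))

lemma msupp_map (μ : Measure (Fin n → ℝ)) : msupp (μ.map e) = ⇑e '' msupp μ := by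
  ext x
  constructor
  · intro hx
    refine ⟨e.symm x, ?_, by simp⟩
    intro U hU hxU
    have hW : IsOpen ((⇑e.symm) ⁻¹' U) := hU.preimage e.symm.continuous
    have hmem : x ∈ (⇑e.symm) ⁻¹' U := by simpa using hxU
    have := hx _ hW hmem
    rwa [Measure.map_apply e.continuous.measurable hW.measurableSet,
      show (⇑e) ⁻¹' ((⇑e.symm) ⁻¹' U) = U by ext y; simp] at this
  · rintro ⟨y, hy, rfl⟩ U hU hxU
    rw [Measure.map_apply e.continuous.measurable hU.measurableSet]
    exact hy _ (hU.preimage e.continuous) (by simpa using hxU)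

lemma spanOf_map (μ : Measure (Fin n → ℝ)) :
    spanOf (μ.map e) = Submodule.map (e : (Fin n → ℝ) →ₗ[ℝ] (Fin n → ℝ)) (spanOf μ) := by
  rw [spanOf, msupp_map, spanOf, ← Submodule.span_image]
  congr 1

lemma isPure_map {μ : Measure (Fin n → ℝ)} (hμ : IsPure μ) : IsPure (μ.map e) := by
  obtain ⟨h0, hfin, hp⟩ := hμ
  haveI := hfin
  refine ⟨?_, inferInstance, ?_⟩
  · intro hc
    apply h0
    have h1 : μ.map ⇑e Set.univ = 0 := by rw [hc]; simp
    rw [Measure.map_apply e.continuous.measurable MeasurableSet.univ] at h1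
    simpa [MeasureTheory.Measure.measure_univ_eq_zero] using h1
  · intro W hW
    rw [Measure.map_apply e.continuous.measurable
      (Submodule.closed_of_finiteDimensional W).measurableSet] at hW
    have hpre : (⇑e) ⁻¹' (W : Set (Fin n → ℝ)) =
        ((Submodule.comap (e : (Fin n → ℝ) →ₗ[ℝ] (Fin n → ℝ)) W : Submodule ℝ (Fin n → ℝ)) :
          Set (Fin n → ℝ)) := rfl
    rw [hpre] at hW
    have hle := hp _ hW
    have : spanOf (μ.map ⇑e) ≤ W := by
      rw [spanOf_map]
      exact Submodule.map_le_iff_le_comap.2 hle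
    exact this

end Map

/-- The continuous linear automorphism of `ℝ^n` given by an element of `GL(n,ℝ)`. -/
noncomputable def glHomeo (g : GL (Fin n) ℝ) : (Fin n → ℝ) ≃L[ℝ] (Fin n → ℝ) :=
  LinearEquiv.toContinuousLinearEquiv <| LinearEquiv.ofLinear
    (Matrix.mulVecLin (g : Matrix (Fin n) (Fin n) ℝ))
    (Matrix.mulVecLin ((g⁻¹ : GL (Fin n) ℝ) : Matrix (Fin n) (Fin n) ℝ))
    (by
      rw [← Matrix.mulVecLin_mul, ← Units.val_mul, mul_inv_cancel]
      simp [Matrix.mulVecLin_one])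
    (by
      rw [← Matrix.mulVecLin_mul, ← Units.val_mul, inv_mul_cancel]
      simp [Matrix.mulVecLin_one])

lemma glHomeo_coe (g : GL (Fin n) ℝ) :
    ⇑(glHomeo g) = fun v => Matrix.mulVec (g : Matrix (Fin n) (Fin n) ℝ) v := rfl

instance : FirstCountableTopology (Matrix (Fin n) (Fin n) ℝ) :=
  inferInstanceAs (FirstCountableTopology (Fin n → Fin n → ℝ))

instance : FirstCountableTopology ((Matrix (Fin n) (Fin n) ℝ)ᵐᵒᵖ) :=
  (MulOpposite.opHomeomorph.symm :
    (Matrix (Fin n) (Fin n) ℝ)ᵐᵒᵖ ≃ₜ Matrix (Fin n) (Fin n) ℝ).isEmbedding.firstCountableTopology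

instance : FirstCountableTopology (GL (Fin n) ℝ) :=
  Units.isEmbedding_embedProduct.firstCountableTopology

lemma continuous_integral_mulVec (μ : Measure (Fin n → ℝ)) [IsFiniteMeasure μ]
    {ψ : (Fin n → ℝ) → ℝ} (hc : Continuous ψ) {M : ℝ} (hb : ∀ x, ‖ψ x‖ ≤ M) :
    Continuous fun g : GL (Fin n) ℝ =>
      ∫ v, ψ (Matrix.mulVec (g : Matrix (Fin n) (Fin n) ℝ) v) ∂μ := by
  apply continuous_of_dominated (bound := fun _ => M)
  · intro g
    exact (hc.comp (continuous_const.matrix_mulVec continuous_id)).aestronglyMeasurable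
  · intro g
    exact Filter.Eventually.of_forall fun v => hb _
  · exact integrable_const M
  · apply Filter.Eventually.of_forall
    intro v
    exact hc.comp ((Units.continuous_val.comp continuous_id).matrix_mulVec continuous_const)

lemma subsingleton_of_countable_preconnected {S : Set ℝ} (hS : S.Countable)
    (hconn : IsPreconnected S) : S.Subsingleton := by
  have key : ∀ a b : ℝ, a ∈ S → b ∈ S → a < b → False := by
    intro a b ha hb hab
    have hIcc : Set.Icc a b ⊆ S := (hconn.ordConnected).out ha hb
    have hcnt : (Set.Icc a b).Countable := hS.mono hIcc
    rw [← Cardinal.le_aleph0_iff_set_countable, Cardinal.mk_Icc_real hab] at hcnt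
    exact (not_le.2 Cardinal.aleph0_lt_continuum) hcnt
  intro a ha b hb
  by_contra hne
  rcases Ne.lt_or_gt hne with hab | hab
  · exact key a b ha hb hab
  · exact key b a hb ha hab

end Stmt4Aux

/-- If a Borel probability measure `lam` on `ℝ^n` (`n ≥ 2`) is invariant
under a connected subgroup `C` of `GL(n,ℝ)`, then each component of any pure
decomposition of `lam` is `C`-invariant. -/
theorem stmt4 (n : ℕ) (hn : 2 ≤ n)
    (lam : Measure (Fin n → ℝ)) [IsProbabilityMeasure lam]
    (ι : Type) (f : ι → Measure (Fin n → ℝ)) (hdec : IsPureDecomp lam f)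
    (C : Subgroup (GL (Fin n) ℝ))
    (hCconn : IsConnected (C : Set (GL (Fin n) ℝ)))
    (hinv : ∀ g ∈ C,
      lam.map (fun v => Matrix.mulVec (g : Matrix (Fin n) (Fin n) ℝ) v) = lam) :
    ∀ g ∈ C, ∀ i : ι,
      (f i).map (fun v => Matrix.mulVec (g : Matrix (Fin n) (Fin n) ℝ) v) = f i := by
  classical
  obtain ⟨hcount, hpure, hdist, hsum⟩ := hdec
  haveI := hcount
  have hdist' : ∀ i j : ι, i ≠ j → Stmt4Aux.spanOf (f i) ≠ Stmt4Aux.spanOf (f j) := hdist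
  haveI : ∀ j : ι, IsFiniteMeasure (f j) := fun j => (hpure j).2.1
  intro g hg i
  -- every pushforward by an element of `C` is again some component of the decomposition
  have key : ∀ c : GL (Fin n) ℝ, c ∈ C → ∃ j : ι,
      f j = (f i).map (fun v => Matrix.mulVec (c : Matrix (Fin n) (Fin n) ℝ) v) := by
    intro c hc
    set e := Stmt4Aux.glHomeo (n := n) c with hedef
    have hcoe : ⇑e = fun v => Matrix.mulVec (c : Matrix (Fin n) (Fin n) ℝ) v :=
      Stmt4Aux.glHomeo_coe c
    have hm : Measurable (⇑e) := e.continuous.measurable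
    have hpure' : ∀ j, IsPure ((f j).map ⇑e) := fun j => Stmt4Aux.isPure_map e (hpure j)
    have hdist'' : ∀ a b : ι, a ≠ b →
        Stmt4Aux.spanOf ((f a).map ⇑e) ≠ Stmt4Aux.spanOf ((f b).map ⇑e) := by
      intro a b hab hEq
      rw [Stmt4Aux.spanOf_map, Stmt4Aux.spanOf_map] at hEq
      exact hdist' a b hab (Submodule.map_injective_of_injective
        (by simpa using e.injective) hEq)
    have hsum' : Measure.sum (fun j => (f j).map ⇑e) = Measure.sum f := by
      rw [← Measure.map_sum hm.aemeasurable, ← hsum, hcoe, hinv c hc, hsum]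
    obtain ⟨j, hj⟩ := Stmt4Aux.exists_measure_eq hpure' hdist'' hpure hdist' hsum' i
    exact ⟨j, by rw [hj, hcoe]⟩
  -- measurability of the action map
  have hm : Measurable (fun v => Matrix.mulVec (g : Matrix (Fin n) (Fin n) ℝ) v) :=
    (continuous_const.matrix_mulVec continuous_id).measurable
  haveI : IsFiniteMeasure ((f i).map (fun v =>
      Matrix.mulVec (g : Matrix (Fin n) (Fin n) ℝ) v)) :=
    Measure.isFiniteMeasure_map _ _
  refine MeasureTheory.ext_of_forall_lintegral_eq_of_IsFiniteMeasure ?_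
  intro φ
  set ψ : (Fin n → ℝ) → ℝ := fun x => (φ x : ℝ) with hψdef
  have hψc : Continuous ψ := NNReal.continuous_coe.comp φ.continuous
  obtain ⟨M0, hM0⟩ := φ.bounded
  set M : ℝ := (φ 0 : ℝ) + M0 with hMdef
  have hψb : ∀ x, ‖ψ x‖ ≤ M := by
    intro x
    have hd := hM0 x 0
    rw [NNReal.dist_eq] at hd
    have h1 : (φ x : ℝ) ≤ (φ 0 : ℝ) + M0 := by
      have := (abs_le.1 hd).2
      linarith
    have h2 : ‖ψ x‖ = (φ x : ℝ) := by
      simp [hψdef, Real.norm_eq_abs, abs_of_nonneg (φ x).coe_nonneg]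
    rw [h2]; exact h1
  set F : GL (Fin n) ℝ → ℝ := fun c =>
    ∫ v, ψ (Matrix.mulVec (c : Matrix (Fin n) (Fin n) ℝ) v) ∂(f i) with hFdef
  have hFc : Continuous F := Stmt4Aux.continuous_integral_mulVec (f i) hψc hψb
  have himage : F '' (C : Set (GL (Fin n) ℝ)) ⊆
      Set.range (fun j : ι => ∫ v, ψ v ∂(f j)) := by
    rintro _ ⟨c, hc, rfl⟩
    obtain ⟨j, hj⟩ := key c hc
    refine ⟨j, ?_⟩
    have hmc : Measurable (fun v => Matrix.mulVec (c : Matrix (Fin n) (Fin n) ℝ) v) :=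
      (continuous_const.matrix_mulVec continuous_id).measurable
    show ∫ v, ψ v ∂(f j) =
      ∫ v, ψ (Matrix.mulVec (c : Matrix (Fin n) (Fin n) ℝ) v) ∂(f i)
    rw [hj, integral_map hmc.aemeasurable hψc.aestronglyMeasurable]
  have hpre : IsPreconnected (F '' (C : Set (GL (Fin n) ℝ))) :=
    hCconn.isPreconnected.image F hFc.continuousOn
  have hcnt : (F '' (C : Set (GL (Fin n) ℝ))).Countable :=
    (Set.countable_range _).mono himage
  have hsing := Stmt4Aux.subsingleton_of_countable_preconnected hcnt hpre
  have hFg : F g = F 1 :=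
    hsing (Set.mem_image_of_mem F hg) (Set.mem_image_of_mem F C.one_mem)
  have h1 : F 1 = ∫ v, ψ v ∂(f i) := by
    simp [hFdef, Units.val_one, Matrix.one_mulVec]
  have hint : ∫ v, ψ v ∂((f i).map (fun v =>
      Matrix.mulVec (g : Matrix (Fin n) (Fin n) ℝ) v)) = ∫ v, ψ v ∂(f i) := by
    rw [integral_map hm.aemeasurable hψc.aestronglyMeasurable]
    exact hFg.trans h1
  have hI1 : Integrable ψ ((f i).map (fun v =>
      Matrix.mulVec (g : Matrix (Fin n) (Fin n) ℝ) v)) :=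
    (integrable_const M).mono' hψc.aestronglyMeasurable
      (Filter.Eventually.of_forall hψb)
  have hI2 : Integrable ψ (f i) :=
    (integrable_const M).mono' hψc.aestronglyMeasurable
      (Filter.Eventually.of_forall hψb)
  rw [lintegral_coe_eq_integral _ hI1, lintegral_coe_eq_integral _ hI2, hint]
end
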